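/- Let X be a discrete random variable, J a discrete random variable that is a function of X taking values in a finite set of size K^n, and X̂ a function of J. If the distortion achieved, D* = E[d(X,X̂)], equals the value of the rate–distortion function D_X(R) at R = n·log K, and D_X is strictly decreasing at R, then H(J) = n·log K, i.e., J is maximum-entropy (uniform) over its K^n-element alphabet. -/

import Mathlib

open Real

noncomputable section

/-- `p` is a probability mass function on the finite type `α`. -/
def IsPMF {α : Type*} [Fintype α] (p : α → ℝ) : Prop :=
  (∀ a, 0 ≤ p a) ∧ ∑ a, p a = 1

/-- Shannon entropy (base 2) of a pmf on a finite type. -/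
def ent {α : Type*} [Fintype α] (p : α → ℝ) : ℝ :=
  -∑ a, p a * Real.logb 2 (p a)

/-- `W` is a conditional distribution (channel/kernel) from `α` to `β`. -/
def IsKernel {α β : Type*} [Fintype β] (W : α → β → ℝ) : Prop :=
  (∀ a b, 0 ≤ W a b) ∧ ∀ a, ∑ b, W a b = 1

/-- First marginal of a joint pmf. -/
def margFst {α β : Type*} [Fintype β] (j : α × β → ℝ) : α → ℝ :=
  fun a => ∑ b, j (a, b)

/-- Second marginal of a joint pmf. -/
def margSnd {α β : Type*} [Fintype α] (j : α × β → ℝ) : β → ℝ :=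
  fun b => ∑ a, j (a, b)

/-- Mutual information (base 2) of a joint pmf on `α × β`. -/
def mutInf {α β : Type*} [Fintype α] [Fintype β] (j : α × β → ℝ) : ℝ :=
  ∑ x, j x * Real.logb 2 (j x / (margFst j x.1 * margSnd j x.2))

/-- Rate–distortion function of the source `p` with distortion `d`:
infimum of expected distortion over channels with mutual information at most `R`. -/
def RD {α β : Type*} [Fintype α] [Fintype β] (p : α → ℝ) (d : α → β → ℝ) (R : ℝ) : ℝ :=
  sInf {D | ∃ W : α → β → ℝ, IsKernel W ∧
    mutInf (fun x : α × β => p x.1 * W x.1 x.2) ≤ R ∧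
    D = ∑ a, ∑ b, p a * W a b * d a b}

/-- Pushforward pmf of `p` under the map `f` (the law of `f(X)`). -/
def push {α γ : Type*} [Fintype α] [DecidableEq γ] (p : α → ℝ) (f : α → γ) : γ → ℝ :=
  fun c => ∑ a, if f a = c then p a else 0


lemma push_nonneg' {α γ : Type*} [Fintype α] [DecidableEq γ]
    {p : α → ℝ} (hp : ∀ a, 0 ≤ p a) (f : α → γ) (c : γ) : 0 ≤ push p f c :=
  Finset.sum_nonneg fun a _ => by split <;> simp [hp a]

lemma le_push {α γ : Type*} [Fintype α] [DecidableEq γ]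
    {p : α → ℝ} (hp : ∀ a, 0 ≤ p a) (f : α → γ) (a : α) : p a ≤ push p f (f a) := by
  have h := Finset.single_le_sum (f := fun a' => if f a' = f a then p a' else 0)
    (fun a' _ => by split <;> simp [hp a']) (Finset.mem_univ a)
  simpa [push] using h

lemma push_sum' {α γ : Type*} [Fintype α] [Fintype γ] [DecidableEq γ]
    (p : α → ℝ) (f : α → γ) (L : γ → ℝ) :
    ∑ c, push p f c * L c = ∑ a, p a * L (f a) := by
  unfold push
  simp_rw [Finset.sum_mul, ite_mul, zero_mul]
  rw [Finset.sum_comm]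
  simp [Finset.sum_ite_eq]

lemma ent_push {α γ : Type*} [Fintype α] [Fintype γ] [DecidableEq γ]
    (p : α → ℝ) (f : α → γ) :
    ent (push p f) = -∑ a, p a * Real.logb 2 (push p f (f a)) := by
  unfold ent
  rw [push_sum' p f (fun c => Real.logb 2 (push p f c))]

lemma ent_nonneg' {α : Type*} [Fintype α] {p : α → ℝ} (hp : IsPMF p) : 0 ≤ ent p := by
  unfold ent
  rw [neg_nonneg]
  apply Finset.sum_nonpos
  intro a _
  have h1 : p a ≤ 1 := by
    rw [← hp.2]
    exact Finset.single_le_sum (fun a' _ => hp.1 a') (Finset.mem_univ a)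
  exact mul_nonpos_of_nonneg_of_nonpos (hp.1 a) (Real.logb_nonpos one_lt_two (hp.1 a) h1)

lemma ent_le_log_card' {α : Type*} [Fintype α] {p : α → ℝ} (hp : IsPMF p)
    (hc : 0 < Fintype.card α) : ent p ≤ Real.logb 2 (Fintype.card α) := by
  set N : ℝ := (Fintype.card α : ℝ) with hN
  have hN0 : 0 < N := by rw [hN]; exact_mod_cast hc
  have key : ∑ a, Real.negMulLog (p a) ≤ Real.log N := by
    have hJ := Real.concaveOn_negMulLog.le_map_sum (t := Finset.univ)
      (w := fun _ : α => N⁻¹) (p := p)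
      (fun _ _ => by positivity)
      (by simp [Finset.sum_const, hN]; field_simp)
      (fun a _ => Set.mem_Ici.mpr (hp.1 a))
    simp only [smul_eq_mul, ← Finset.mul_sum, hp.2, mul_one] at hJ
    have : Real.negMulLog N⁻¹ = N⁻¹ * Real.log N := by
      unfold Real.negMulLog
      rw [Real.log_inv]; ring
    rw [this] at hJ
    calc ∑ a, Real.negMulLog (p a) = N * (N⁻¹ * ∑ a, Real.negMulLog (p a)) := by
          field_simp
      _ ≤ N * (N⁻¹ * Real.log N) := by
          apply mul_le_mul_of_nonneg_left _ hN0.le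
          simpa [Finset.mul_sum] using hJ
      _ = Real.log N := by field_simp
  have hlog2 : (0:ℝ) < Real.log 2 := Real.log_pos one_lt_two
  unfold ent
  rw [Real.logb, div_eq_inv_mul]
  have : -∑ a, p a * Real.logb 2 (p a) = (Real.log 2)⁻¹ * ∑ a, Real.negMulLog (p a) := by
    unfold Real.logb Real.negMulLog
    rw [Finset.mul_sum, ← Finset.sum_neg_distrib]
    congr 1
    ext a
    field_simp
  rw [this]
  exact mul_le_mul_of_nonneg_left key (by positivity)

lemma mutInf_det_le' {α β γ : Type*} [Fintype α] [Fintype β] [DecidableEq β] [Fintype γ] [DecidableEq γ]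
    {p : α → ℝ} (hp : IsPMF p) (f : α → γ) (g : γ → β) :
    mutInf (fun x : α × β => p x.1 * (if x.2 = g (f x.1) then 1 else 0))
      ≤ ent (push p f) := by
  set j : α × β → ℝ := fun x => p x.1 * (if x.2 = g (f x.1) then 1 else 0) with hj
  set s : β → ℝ := push p (g ∘ f) with hs
  have hm1 : ∀ a, margFst j a = p a := by
    intro a
    unfold margFst
    simp [hj, mul_ite, Finset.sum_ite_eq']
  have hm2 : ∀ b, margSnd j b = s b := by
    intro b
    unfold margSnd
    simp only [hj, hs, push, Function.comp, mul_ite, mul_one, mul_zero]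
    exact Finset.sum_congr rfl fun a _ => by
      by_cases h : b = g (f a) <;> simp [h, eq_comm]
  have hred : mutInf j = ∑ a, p a * Real.logb 2 (p a / (p a * s (g (f a)))) := by
    unfold mutInf
    rw [Fintype.sum_prod_type]
    refine Finset.sum_congr rfl fun a _ => ?_
    calc ∑ b, j (a, b) * Real.logb 2 (j (a,b) / (margFst j (a,b).1 * margSnd j (a,b).2))
        = ∑ b, (if b = g (f a) then p a * Real.logb 2 (p a / (p a * s (g (f a)))) else 0) := by
          refine Finset.sum_congr rfl fun b _ => ?_
          by_cases h : b = g (f a)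
          · rw [show margFst j (a,b).1 = p a from hm1 a,
              show margSnd j (a,b).2 = s b from hm2 b, h]
            simp [hj]
          · simp [hj, h]
      _ = _ := by simp
  rw [hred, ent_push]
  rw [← Finset.sum_neg_distrib]
  refine Finset.sum_le_sum fun a _ => ?_
  rcases eq_or_lt_of_le (hp.1 a) with h0 | h0
  · simp [← h0]
  · have hq : 0 < push p f (f a) := lt_of_lt_of_le h0 (le_push hp.1 f a)
    have hqs : push p f (f a) ≤ s (g (f a)) := by
      rw [hs]
      unfold push
      apply Finset.sum_le_sum
      intro a' _
      dsimp only [Function.comp]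
      by_cases h : f a' = f a
      · simp [h, hp.1 a']
      · simp only [h, if_false]
        split <;> simp [hp.1 a']
    have hs0 : 0 < s (g (f a)) := lt_of_lt_of_le hq hqs
    have harg : p a / (p a * s (g (f a))) = (s (g (f a)))⁻¹ := by
      field_simp
    rw [harg, Real.logb_inv]
    rw [mul_neg, neg_le_neg_iff]
    exact mul_le_mul_of_nonneg_left
      (Real.logb_le_logb_of_le one_lt_two hq hqs) (hp.1 a)


lemma push_isPMF {α γ : Type*} [Fintype α] [Fintype γ] [DecidableEq γ]
    {p : α → ℝ} (hp : IsPMF p) (f : α → γ) : IsPMF (push p f) := by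
  constructor
  · intro c
    exact Finset.sum_nonneg fun a _ => by split <;> simp [hp.1 a]
  · rw [← hp.2]
    unfold push
    rw [Finset.sum_comm]
    exact Finset.sum_congr rfl fun a _ => by simp

/-- if a deterministic quantizer `J = f(X)` with `K^n` possible values and
reconstruction `X̂ = g(J)` achieves distortion equal to the rate–distortion function at
`R = n·log₂ K`, and the rate–distortion function is strictly decreasing at `R`, then
`H(J) = n·log₂ K`, i.e. `J` is maximum-entropy over its `K^n`-element alphabet. -/
theorem stmt0 {α β : Type*} [Fintype α] [Fintype β] [Nonempty β]
    (p : α → ℝ) (hp : IsPMF p) (d : α → β → ℝ) (hd : ∀ a b, 0 ≤ d a b)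
    (K n : ℕ) (hK : 2 ≤ K) (hn : 1 ≤ n)
    (f : α → Fin (K ^ n)) (g : Fin (K ^ n) → β)
    (hopt : ∑ a, p a * d a (g (f a)) = RD p d (n * Real.logb 2 K))
    (hdec : ∀ R' : ℝ, 0 ≤ R' → R' < n * Real.logb 2 K →
      RD p d (n * Real.logb 2 K) < RD p d R') :
    ent (push p f) = n * Real.logb 2 K := by

  haveI : DecidableEq β := Classical.decEq β
  have hpmf := push_isPMF hp f
  have hcard : 0 < Fintype.card (Fin (K ^ n)) := by
    rw [Fintype.card_fin]
    positivity
  have hEle : ent (push p f) ≤ (n : ℝ) * Real.logb 2 K := by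
    have h := ent_le_log_card' hpmf hcard
    rwa [Fintype.card_fin, Nat.cast_pow, Real.logb_pow] at h
  have hE0 : 0 ≤ ent (push p f) := ent_nonneg' hpmf
  rcases eq_or_lt_of_le hEle with heq | hlt
  · exact heq
  exfalso
  have hmem : (∑ a, p a * d a (g (f a))) ∈ {D | ∃ W : α → β → ℝ, IsKernel W ∧
      mutInf (fun x : α × β => p x.1 * W x.1 x.2) ≤ ent (push p f) ∧
      D = ∑ a, ∑ b, p a * W a b * d a b} := by
    refine ⟨fun a b => if b = g (f a) then 1 else 0, ⟨fun a b => ?_, fun a => ?_⟩, ?_, ?_⟩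
    · dsimp only; split <;> norm_num
    · simp [Finset.sum_ite_eq']
    · exact mutInf_det_le' hp f g
    · refine Finset.sum_congr rfl fun a _ => ?_
      symm
      simp [mul_ite, ite_mul, Finset.sum_ite_eq']
  have hbdd : BddBelow {D | ∃ W : α → β → ℝ, IsKernel W ∧
      mutInf (fun x : α × β => p x.1 * W x.1 x.2) ≤ ent (push p f) ∧
      D = ∑ a, ∑ b, p a * W a b * d a b} := by
    refine ⟨0, fun D hD => ?_⟩
    obtain ⟨W, hW, _, rfl⟩ := hD
    exact Finset.sum_nonneg fun a _ => Finset.sum_nonneg fun b _ =>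
      mul_nonneg (mul_nonneg (hp.1 a) (hW.1 a b)) (hd a b)
  have h1 : RD p d (ent (push p f)) ≤ ∑ a, p a * d a (g (f a)) := csInf_le hbdd hmem
  have h2 := hdec _ hE0 hlt
  rw [hopt] at h1
  exact absurd h1 (not_le.mpr h2)
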